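/- Let n ≥ 2 be an integer and p ∈ (0, 1/n); set u = √((n·p + 1)² - 4·p), w₁ = (1 - n·p - u)/2 and w₂ = (1 - n·p + u)/2. Then for every real z with |z|·w₂ < 1, the series ∑_{k=1}^∞ (p·(w₂^k - w₁^k)/u)·z^k converges and equals p·z/(1 - (1 - n·p)·z - (n-1)·p·z²). -/

import Mathlib

/-- The probability generating function of the hitting time T_C:
∑_{k≥1} Pr(T_C = k)·z^k = p·z/(1 - (1 - n·p)·z - (n-1)·p·z²). -/
theorem stmt_14 (n : ℕ) (hn : 2 ≤ n) (p : ℝ) (hp : p ∈ Set.Ioo (0 : ℝ) (1 / (n : ℝ)))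
    (u w₁ w₂ : ℝ)
    (hu : u = Real.sqrt (((n : ℝ) * p + 1) ^ 2 - 4 * p))
    (hw₁ : w₁ = (1 - (n : ℝ) * p - u) / 2) (hw₂ : w₂ = (1 - (n : ℝ) * p + u) / 2) :
    ∀ z : ℝ, |z| * w₂ < 1 →
      HasSum (fun k : ℕ => (p * (w₂ ^ (k + 1) - w₁ ^ (k + 1)) / u) * z ^ (k + 1))
        (p * z / (1 - (1 - (n : ℝ) * p) * z - ((n : ℝ) - 1) * p * z ^ 2)) := by
  obtain ⟨hp0, hp1⟩ := hp
  have hN2 : (2 : ℝ) ≤ (n : ℝ) := by exact_mod_cast hn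
  have hN0 : (0 : ℝ) < (n : ℝ) := by linarith
  have hnp1 : (n : ℝ) * p < 1 := by
    rw [lt_div_iff₀ hN0] at hp1; linarith
  have harg : 0 < ((n : ℝ) * p + 1) ^ 2 - 4 * p := by nlinarith
  have hu0 : 0 < u := by rw [hu]; exact Real.sqrt_pos.mpr harg
  have hu2 : u ^ 2 = ((n : ℝ) * p + 1) ^ 2 - 4 * p := by
    rw [hu, Real.sq_sqrt harg.le]
  have hsum : w₁ + w₂ = 1 - (n : ℝ) * p := by rw [hw₁, hw₂]; ring
  have hprod : w₁ * w₂ = -(((n : ℝ) - 1) * p) := by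
    rw [hw₁, hw₂]; linear_combination (-1/4 : ℝ) * hu2
  have hdiff : w₂ - w₁ = u := by rw [hw₁, hw₂]; ring
  have hw2pos : 0 < w₂ := by rw [hw₂]; nlinarith
  have habs1 : |w₁| ≤ w₂ := by
    rw [abs_le]; constructor <;> nlinarith
  intro z hz
  have h2lt : |w₂ * z| < 1 := by
    rw [abs_mul, abs_of_pos hw2pos, mul_comm]; exact hz
  have h1lt : |w₁ * z| < 1 := by
    rw [abs_mul]
    calc |w₁| * |z| ≤ w₂ * |z| := by
          apply mul_le_mul_of_nonneg_right habs1 (abs_nonneg z)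
    _ = |z| * w₂ := by ring
    _ < 1 := hz
  have h2ne : 1 - w₂ * z ≠ 0 := by
    have := abs_lt.mp h2lt; intro h; linarith [this.2]
  have h1ne : 1 - w₁ * z ≠ 0 := by
    have := abs_lt.mp h1lt; intro h; linarith [this.2]
  have g2 : HasSum (fun k : ℕ => (w₂ * z) ^ (k + 1)) (w₂ * z / (1 - w₂ * z)) := by
    have := (hasSum_geometric_of_abs_lt_one h2lt).mul_left (w₂ * z)
    simpa [div_eq_mul_inv, one_div, ← pow_succ'] using this
  have g1 : HasSum (fun k : ℕ => (w₁ * z) ^ (k + 1)) (w₁ * z / (1 - w₁ * z)) := by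
    have := (hasSum_geometric_of_abs_lt_one h1lt).mul_left (w₁ * z)
    simpa [div_eq_mul_inv, one_div, ← pow_succ'] using this
  have g := ((g2.sub g1).mul_left (p / u))
  have hfun : (fun k : ℕ => p / u * ((w₂ * z) ^ (k + 1) - (w₁ * z) ^ (k + 1)))
      = (fun k : ℕ => (p * (w₂ ^ (k + 1) - w₁ ^ (k + 1)) / u) * z ^ (k + 1)) := by
    funext k; rw [mul_pow, mul_pow]; ring
  rw [hfun] at g
  have hden : 1 - (1 - (n : ℝ) * p) * z - ((n : ℝ) - 1) * p * z ^ 2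
      = (1 - w₁ * z) * (1 - w₂ * z) := by
    linear_combination z * hsum - z ^ 2 * hprod
  have hval : p / u * (w₂ * z / (1 - w₂ * z) - w₁ * z / (1 - w₁ * z))
      = p * z / ((1 - w₁ * z) * (1 - w₂ * z)) := by
    have hw2' : w₂ = w₁ + u := by linarith
    have hu' : u ≠ 0 := hu0.ne'
    rw [hw2'] at h2ne ⊢
    field_simp
    ring
  rw [hden]
  rwa [hval] at g
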